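/- (Jacobi triple product) For complex numbers q, x with 0 < |q| < 1 and x ≠ 0, one has (x;q)_∞ · (q/x;q)_∞ · (q;q)_∞ = ∑_{n∈ℤ} (-1)^n q^{n(n-1)/2} x^n, where (a;q)_∞ := ∏_{i≥0} (1 - q^i a). -/

import Mathlib

/-- The infinite `q`-Pochhammer symbol `(a;q)_∞ = ∏_{i≥0} (1 - q^i a)`. -/
noncomputable def pochInf (a q : ℂ) : ℂ := ∏' i : ℕ, (1 - q ^ i * a)

open Finset

namespace JTP

theorem two_choose_two (m : ℕ) : 2 * (m.choose 2 : ℤ) = (m:ℤ) * ((m:ℤ)-1) := by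
  induction m with
  | zero => simp
  | succ s ih =>
    rw [Nat.choose_succ_succ, Nat.choose_one_right]
    push_cast; push_cast at ih; linarith

theorem two_halfint (n : ℤ) : 2 * (n * (n-1) / 2) = n * (n-1) := by
  obtain ⟨c, hc⟩ := Int.even_mul_succ_self (n - 1)
  have h : n * (n - 1) = 2 * c := by linarith
  omega

noncomputable def fac (q : ℂ) (m : ℕ) : ℂ := ∏ i ∈ Finset.range m, (1 - q ^ (i+1))

noncomputable def gb (q : ℂ) (m k : ℕ) : ℂ :=
  if k ≤ m then fac q m / (fac q k * fac q (m - k)) else 0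

variable {q : ℂ}

theorem one_sub_pow_ne (hq1 : ‖q‖ < 1) (i : ℕ) : (1 : ℂ) - q ^ (i+1) ≠ 0 := by
  intro h
  have h2 : q ^ (i+1) = 1 := by linear_combination -h
  have h3 : ‖q ^ (i+1)‖ = 1 := by rw [h2, norm_one]
  rw [norm_pow] at h3
  have hlt : ‖q‖ ^ (i+1) < 1 :=
    pow_lt_one₀ (norm_nonneg q) hq1 (Nat.succ_ne_zero i)
  rw [h3] at hlt; exact lt_irrefl 1 hlt

theorem fac_ne_zero (hq1 : ‖q‖ < 1) (m : ℕ) : fac q m ≠ 0 :=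
  Finset.prod_ne_zero_iff.mpr fun i _ => one_sub_pow_ne hq1 i

theorem fac_succ (m : ℕ) : fac q (m+1) = fac q m * (1 - q ^ (m+1)) :=
  Finset.prod_range_succ _ m

theorem gb_zero (hq1 : ‖q‖ < 1) (m : ℕ) : gb q m 0 = 1 := by
  simp only [gb, Nat.zero_le, if_pos, Nat.sub_zero]
  rw [show fac q 0 = 1 from rfl, one_mul, div_self (fac_ne_zero hq1 m)]

theorem gb_self (hq1 : ‖q‖ < 1) (m : ℕ) : gb q m m = 1 := by
  simp only [gb, le_refl, if_pos, Nat.sub_self]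
  show fac q m / (fac q m * fac q 0) = 1
  rw [show fac q 0 = 1 from rfl, mul_one, div_self (fac_ne_zero hq1 m)]

theorem gb_of_gt {m k : ℕ} (h : m < k) : gb q m k = 0 := by
  simp [gb, Nat.not_le.mpr h]

theorem gb_pascal (hq1 : ‖q‖ < 1) {m k : ℕ} (hk : k ≤ m) :
    gb q (m+1) (k+1) = gb q m (k+1) + q ^ (m-k) * gb q m k := by
  rcases eq_or_lt_of_le hk with rfl | hlt
  · rw [gb_self hq1, gb_of_gt (Nat.lt_succ_self k), gb_self hq1]
    simp
  · have hk1 : k + 1 ≤ m := hlt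
    rw [gb, gb, gb, if_pos (by omega), if_pos hk1, if_pos hk]
    have h1 : m + 1 - (k+1) = m - k := by omega
    rw [h1]
    have hmk : fac q (m-k) = fac q (m-(k+1)) * (1 - q^(m-k)) := by
      rw [show m-k = (m-(k+1))+1 from by omega, fac_succ,
        show m-(k+1)+1 = m-k from by omega]
    rw [hmk, fac_succ m, fac_succ k]
    have hqq : q ^ (m+1) = q ^ (k+1) * q ^ (m - k) := by
      rw [← pow_add]; congr 1; omega
    have hA := fac_ne_zero hq1 k
    have hB := fac_ne_zero hq1 (m - (k+1))
    have hF := fac_ne_zero hq1 m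
    have hc : (1:ℂ) - q ^ (k+1) ≠ 0 := one_sub_pow_ne hq1 k
    have hd : (1:ℂ) - q ^ (m-k) ≠ 0 := by
      rw [show m - k = (m - (k+1)) + 1 from by omega]; exact one_sub_pow_ne hq1 _
    rw [hqq]
    generalize q ^ (k+1) = a at hc ⊢
    generalize q ^ (m-k) = b at hd ⊢
    generalize fac q k = A at hA ⊢
    generalize fac q (m - (k+1)) = B at hB ⊢
    generalize fac q m = F at hF ⊢
    field_simp
    ring


theorem gauss (hq1 : ‖q‖ < 1) (y : ℂ) (m : ℕ) :
    ∏ j ∈ range m, (1 - q^j * y)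
      = ∑ k ∈ range (m+1), (-1)^k * gb q m k * q^(k.choose 2) * y^k := by
  induction m with
  | zero => simp [gb_zero hq1]
  | succ m ih =>
    rw [Finset.prod_range_succ, ih,
      Finset.sum_range_succ' (fun k => (-1:ℂ)^k * gb q (m+1) k * q^(k.choose 2) * y^k) (m+1)]
    have hsplit : ∀ k ∈ range (m+1),
        (-1:ℂ)^(k+1) * gb q (m+1) (k+1) * q^((k+1).choose 2) * y^(k+1)
        = (-1:ℂ)^(k+1) * gb q m (k+1) * q^((k+1).choose 2) * y^(k+1)
          + (-(q^m * y)) * ((-1:ℂ)^k * gb q m k * q^(k.choose 2) * y^k) := by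
      intro k hk
      rw [Finset.mem_range] at hk
      rw [gb_pascal hq1 (by omega)]
      have hq2 : q^(m-k) * q^((k+1).choose 2) = q^m * q^(k.choose 2) := by
        rw [← pow_add, ← pow_add]; congr 1
        have h3 : (k+1).choose 2 = k.choose 1 + k.choose 2 := Nat.choose_succ_succ k 1
        rw [Nat.choose_one_right] at h3; omega
      linear_combination ((-1:ℂ)^(k+1) * gb q m k * y^(k+1)) * hq2
    rw [Finset.sum_congr rfl hsplit, Finset.sum_add_distrib, ← Finset.mul_sum]
    have hS1 : (∑ k ∈ range (m+1), (-1:ℂ)^(k+1) * gb q m (k+1) * q^((k+1).choose 2) * y^(k+1))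
        + ((-1:ℂ)^0 * gb q m 0 * q^(Nat.choose 0 2) * y^0)
        = ∑ k ∈ range (m+1), (-1:ℂ)^k * gb q m k * q^(k.choose 2) * y^k := by
      have h2 := Finset.sum_range_succ'
        (fun k => (-1:ℂ)^k * gb q m k * q^(k.choose 2) * y^k) (m+1)
      rw [Finset.sum_range_succ] at h2
      rw [← h2, gb_of_gt (Nat.lt_succ_self m)]
      ring
    have hz : ((-1:ℂ))^0 * gb q (m+1) 0 * q^(Nat.choose 0 2) * y^0
        = ((-1:ℂ))^0 * gb q m 0 * q^(Nat.choose 0 2) * y^0 := by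
      rw [gb_zero hq1, gb_zero hq1]
    rw [hz]
    linear_combination -hS1

theorem natmulpred (N : ℕ) : ((N*(N-1) : ℕ) : ℤ) = (N:ℤ)*((N:ℤ)-1) := by
  rcases N with _ | M
  · simp
  · push_cast [Nat.add_sub_cancel]; ring

theorem finite_jtp (hq1 : ‖q‖ < 1) (hq0 : q ≠ 0) {x : ℂ} (hx : x ≠ 0) (N : ℕ) :
    (∏ j ∈ range N, (1 - q^j * x)) * (∏ j ∈ range N, (1 - q^j * (q/x)))
      = ∑ n ∈ Finset.Icc (-(N:ℤ)) (N:ℤ),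
          gb q (2*N) ((N:ℤ)+n).toNat * ((-1:ℂ)^n * q^(n*(n-1)/2) * x^n) := by
  have hm1 : (-1:ℂ) ≠ 0 := by norm_num
  set S : ℕ := ∑ j ∈ range N, j with hS
  set C : ℂ := (-x)^N * (q^(N*N))⁻¹ * q^S with hC
  have hCne : C ≠ 0 := by
    apply mul_ne_zero (mul_ne_zero _ _)
    · exact pow_ne_zero _ hq0
    · exact pow_ne_zero _ (neg_ne_zero.mpr hx)
    · exact inv_ne_zero (pow_ne_zero _ hq0)
  have hS2 : 2*(S:ℤ) = (N:ℤ)*((N:ℤ)-1) := by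
    have h := Finset.sum_range_id_mul_two N
    have h2 : ((∑ i ∈ range N, i) * 2 : ℕ) = ((N*(N-1) : ℕ)) := h
    have h3 : (((∑ i ∈ range N, i) * 2 : ℕ) : ℤ) = ((N*(N-1) : ℕ) : ℤ) := by
      exact_mod_cast congrArg (fun t : ℕ => (t : ℤ)) h2
    rw [natmulpred] at h3
    rw [← hS] at h3
    push_cast at h3
    linarith
  -- Step A: rewrite the Gauss product for 2N with y = x / q^N
  have hA : ∏ j ∈ range (2*N), (1 - q^j * (x / q^N))
      = C * (∏ j ∈ range N, (1 - q^j * (q/x))) * (∏ j ∈ range N, (1 - q^j * x)) := by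
    rw [two_mul, Finset.prod_range_add]
    have h2 : ∀ j ∈ range N, (1 - q^(N+j) * (x / q^N)) = 1 - q^j * x := by
      intro j _
      rw [pow_add]
      have hqN : (q:ℂ)^N ≠ 0 := pow_ne_zero _ hq0
      field_simp
    rw [Finset.prod_congr rfl h2]
    have h1 : ∀ j ∈ range N, (1 - q^j * (x / q^N))
        = ((-x) * (q^N)⁻¹ * q^j) * (1 - q^(N-1-j) * (q/x)) := by
      intro j hj
      rw [Finset.mem_range] at hj
      have e3 : q^j * (q^(N-1-j) * q) = q^N := by
        rw [← pow_succ, ← pow_add]; congr 1; omega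
      have hqN : (q:ℂ)^N ≠ 0 := pow_ne_zero _ hq0
      field_simp
      linear_combination -e3
    rw [Finset.prod_congr rfl h1, Finset.prod_mul_distrib, Finset.prod_mul_distrib,
      Finset.prod_range_reflect (fun j => 1 - q^j * (q/x)) N,
      Finset.prod_const, Finset.card_range, Finset.prod_pow_eq_pow_sum]
    rw [hC, ← hS]
    ring
  have hG := gauss hq1 (x / q^N) (2*N)
  rw [hA] at hG
  have hfin : (∑ n ∈ Finset.Icc (-(N:ℤ)) (N:ℤ),
        gb q (2*N) ((N:ℤ)+n).toNat * ((-1:ℂ)^n * q^(n*(n-1)/2) * x^n)) * C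
      = ∑ k ∈ range (2*N+1), (-1:ℂ)^k * gb q (2*N) k * q^(k.choose 2) * (x/q^N)^k := by
    rw [Finset.sum_mul]
    refine Finset.sum_nbij' (i := fun n : ℤ => ((N:ℤ)+n).toNat)
      (j := fun k : ℕ => (k:ℤ) - (N:ℤ)) ?_ ?_ ?_ ?_ ?_
    · intro n hn
      rw [Finset.mem_Icc] at hn
      rw [Finset.mem_range]
      omega
    · intro k hk
      rw [Finset.mem_range] at hk
      rw [Finset.mem_Icc]
      omega
    · intro n hn
      rw [Finset.mem_Icc] at hn
      omega
    · intro k hk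
      rw [Finset.mem_range] at hk
      omega
    · intro n hn
      rw [Finset.mem_Icc] at hn
      set k : ℕ := ((N:ℤ)+n).toNat with hkdef
      have hk : (k:ℤ) = (N:ℤ) + n := by rw [hkdef]; omega
      have lhs_eq : gb q (2*N) k * ((-1:ℂ)^n * q^(n*(n-1)/2) * x^n) * C
          = gb q (2*N) k * ((-1:ℂ)^(n + (N:ℤ))
            * q^(n*(n-1)/2 - ((N*N : ℕ):ℤ) + ((S:ℕ):ℤ)) * x^(n + (N:ℤ))) := by
        rw [zpow_add₀ hm1, zpow_add₀ hx, zpow_add₀ hq0, zpow_sub₀ hq0]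
        rw [hC, neg_pow]
        simp only [zpow_natCast]
        ring
      have rhs_eq : (-1:ℂ)^k * gb q (2*N) k * q^(k.choose 2) * (x/q^N)^k
          = gb q (2*N) k * ((-1:ℂ)^((k:ℕ):ℤ)
            * q^(((k.choose 2 : ℕ):ℤ) - ((N*k : ℕ):ℤ)) * x^((k:ℕ):ℤ)) := by
        rw [div_pow, div_eq_mul_inv, zpow_sub₀ hq0]
        simp only [zpow_natCast]
        rw [← pow_mul]
        ring
      rw [lhs_eq, rhs_eq]
      have hxk : n + (N:ℤ) = ((k:ℕ):ℤ) := by omega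
      have hexp : n*(n-1)/2 - ((N*N : ℕ):ℤ) + ((S:ℕ):ℤ)
          = ((k.choose 2 : ℕ):ℤ) - ((N*k : ℕ):ℤ) := by
        have t1 := two_choose_two k
        have t2 := two_halfint n
        have hring : (k:ℤ)*((k:ℤ)-1) - 2*((N:ℤ)*(k:ℤ))
            = n*(n-1) - 2*((N:ℤ)*(N:ℤ)) + (N:ℤ)*((N:ℤ)-1) := by rw [hk]; ring
        push_cast
        push_cast at t1 t2 hS2 hring
        linarith
      rw [hxk, hexp]
  have key : ((∏ j ∈ range N, (1 - q^j * x)) * (∏ j ∈ range N, (1 - q^j * (q/x)))) * C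
      = (∑ n ∈ Finset.Icc (-(N:ℤ)) (N:ℤ),
          gb q (2*N) ((N:ℤ)+n).toNat * ((-1:ℂ)^n * q^(n*(n-1)/2) * x^n)) * C := by
    rw [hfin]
    linear_combination hG
  exact mul_right_cancel₀ hCne key

open Filter Topology

theorem summable_log (hq1 : ‖q‖ < 1) (a : ℂ) (h : ∀ i, 1 - q^i * a ≠ 0) :
    Summable (fun i : ℕ => Complex.log (1 - q^i * a)) := by
  have hgeo : Summable (fun i : ℕ => (3/2) * (‖q‖ ^ i * ‖a‖)) :=
    (((summable_geometric_of_lt_one (norm_nonneg q) hq1).mul_right _).mul_left _)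
  apply Summable.of_norm_bounded_eventually_nat hgeo
  have h0 : Tendsto (fun i : ℕ => ‖q‖ ^ i * ‖a‖) atTop (𝓝 0) := by
    simpa using (tendsto_pow_atTop_nhds_zero_of_lt_one (norm_nonneg q) hq1).mul_const
      (‖a‖)
  filter_upwards [h0.eventually_le_const (by norm_num : (0:ℝ) < 1/2)] with i hi
  have hz : ‖-(q^i * a)‖ ≤ 1/2 := by
    rw [norm_neg, norm_mul, norm_pow]
    exact hi
  have := Complex.norm_log_one_add_half_le_self hz
  rw [show (1:ℂ) + -(q^i * a) = 1 - q^i * a by ring] at this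
  refine this.trans ?_
  rw [norm_neg, norm_mul, norm_pow]

theorem multipliable_aux (hq1 : ‖q‖ < 1) (a : ℂ) :
    Multipliable (fun i : ℕ => 1 - q^i * a) := by
  by_cases h : ∀ i, 1 - q^i * a ≠ 0
  · exact Complex.multipliable_of_summable_log (summable_log hq1 a h)
  · push_neg at h
    obtain ⟨i0, hi0⟩ := h
    refine ⟨0, ?_⟩
    rw [HasProd]
    apply tendsto_const_nhds.congr'
    filter_upwards [eventually_ge_atTop ({i0} : Finset ℕ)] with s hs
    exact (Finset.prod_eq_zero (hs (Finset.mem_singleton_self i0)) hi0).symm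

theorem tendsto_partial_prod (hq1 : ‖q‖ < 1) (a : ℂ) :
    Tendsto (fun N => ∏ i ∈ Finset.range N, (1 - q^i*a)) atTop (𝓝 (pochInf a q)) :=
  (multipliable_aux hq1 a).hasProd.tendsto_prod_nat

theorem pochInf_ne_zero (hq1 : ‖q‖ < 1) (a : ℂ) (h : ∀ i, 1 - q^i*a ≠ 0) :
    pochInf a q ≠ 0 := by
  have h2 := Complex.cexp_tsum_eq_tprod (f := fun i => 1 - q^i*a) h (summable_log hq1 a h)
  rw [pochInf, ← h2]
  exact Complex.exp_ne_zero _

theorem tendsto_fac (hq1 : ‖q‖ < 1) :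
    Tendsto (fun m => fac q m) atTop (𝓝 (pochInf q q)) := by
  apply (tendsto_partial_prod hq1 q).congr
  intro m
  exact Finset.prod_congr rfl fun i _ => by rw [pow_succ]

theorem Fq_ne_zero (hq1 : ‖q‖ < 1) : pochInf q q ≠ 0 := by
  apply pochInf_ne_zero hq1 q
  intro i
  rw [← pow_succ]
  exact one_sub_pow_ne hq1 i

theorem fac_norm_upper (hq1 : ‖q‖ < 1) (m : ℕ) :
    ‖fac q m‖ ≤ Real.exp (‖q‖ / (1 - ‖q‖)) := by
  set r := ‖q‖ with hr
  have hr0 : 0 ≤ r := norm_nonneg q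
  rw [fac, norm_prod]
  have step1 : ∀ i ∈ Finset.range m, ‖1 - q^(i+1)‖ ≤ Real.exp (r^(i+1)) := by
    intro i _
    have h1 : ‖1 - q^(i+1)‖ ≤ 1 + r^(i+1) := by
      have hn := norm_sub_le (1:ℂ) (q^(i+1))
      rw [norm_one, norm_pow] at hn
      exact hn
    refine h1.trans ?_
    have := Real.add_one_le_exp (r^(i+1))
    linarith
  calc ∏ i ∈ Finset.range m, ‖1 - q^(i+1)‖
      ≤ ∏ i ∈ Finset.range m, Real.exp (r^(i+1)) :=
        Finset.prod_le_prod (fun i _ => norm_nonneg _) step1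
    _ = Real.exp (∑ i ∈ Finset.range m, r^(i+1)) := (Real.exp_sum _ _).symm
    _ ≤ Real.exp (r / (1-r)) := by
        apply Real.exp_le_exp.mpr
        have hsum : Summable (fun i : ℕ => r^(i+1)) := by
          apply Summable.comp_injective (summable_geometric_of_lt_one hr0 hq1)
          exact add_left_injective 1
        have h2 : ∑ i ∈ Finset.range m, r^(i+1) ≤ ∑' i : ℕ, r^(i+1) :=
          Summable.sum_le_tsum _ (fun i _ => pow_nonneg hr0 _) hsum
        refine h2.trans ?_
        have h3 : ∑' i : ℕ, r^(i+1) = r * (1-r)⁻¹ := by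
          rw [show (fun i : ℕ => r^(i+1)) = fun i : ℕ => r * r^i from funext fun i => by
            rw [pow_succ]; ring]
          rw [tsum_mul_left, tsum_geometric_of_lt_one hr0 hq1]
        rw [h3, div_eq_mul_inv]

theorem weierstrass_prod (s : Finset ℕ) (f : ℕ → ℝ) (h0 : ∀ i ∈ s, 0 ≤ f i)
    (h1 : ∀ i ∈ s, f i ≤ 1) : 1 - ∑ i ∈ s, f i ≤ ∏ i ∈ s, (1 - f i) := by
  induction s using Finset.cons_induction with
  | empty => simp
  | cons j s hj ih =>
    rw [Finset.prod_cons, Finset.sum_cons]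
    have hs0 : ∀ i ∈ s, 0 ≤ f i := fun i hi => h0 i (Finset.mem_cons_of_mem hi)
    have hs1 : ∀ i ∈ s, f i ≤ 1 := fun i hi => h1 i (Finset.mem_cons_of_mem hi)
    have hp := ih hs0 hs1
    have hsum : 0 ≤ ∑ i ∈ s, f i := Finset.sum_nonneg hs0
    have hj0 : 0 ≤ f j := h0 j (Finset.mem_cons_self _ _)
    have hj1 : f j ≤ 1 := h1 j (Finset.mem_cons_self _ _)
    nlinarith [mul_le_mul_of_nonneg_left hp (by linarith : (0:ℝ) ≤ 1 - f j)]

theorem fac_norm_lower (hq1 : ‖q‖ < 1) :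
    ∃ L > 0, ∀ m, L ≤ ‖fac q m‖ := by
  set r := ‖q‖ with hr
  have hr0 : 0 ≤ r := norm_nonneg q
  have hfl : ∀ i : ℕ, 0 ≤ 1 - r^(i+1) := fun i => by
    have : r^(i+1) ≤ 1 := pow_le_one₀ hr0 hq1.le
    linarith
  -- choose M with tail small
  obtain ⟨M, hM⟩ : ∃ M : ℕ, r^(M+1) * (1-r)⁻¹ ≤ 1/2 := by
    have h0 : Tendsto (fun M : ℕ => r^(M+1) * (1-r)⁻¹) atTop (𝓝 0) := by
      have := (tendsto_pow_atTop_nhds_zero_of_lt_one hr0 hq1).mul_const (1-r)⁻¹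
      rw [zero_mul] at this
      exact this.comp (tendsto_add_atTop_nat 1)
    exact (h0.eventually_le_const (by norm_num : (0:ℝ) < 1/2)).exists
  have htail : ∀ m, M ≤ m → ∑ i ∈ Finset.Ico M m, r^(i+1) ≤ 1/2 := by
    intro m hm
    rw [Finset.sum_Ico_eq_sum_range]
    have h2 : ∀ i ∈ Finset.range (m - M), r^(M+i+1) = r^(M+1) * r^i := by
      intro i _; rw [← pow_add]; congr 1; omega
    rw [Finset.sum_congr rfl h2, ← Finset.mul_sum]
    have h3 : ∑ i ∈ Finset.range (m-M), r^i ≤ (1-r)⁻¹ := by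
      refine le_trans (Summable.sum_le_tsum _ (fun i _ => pow_nonneg hr0 _)
        (summable_geometric_of_lt_one hr0 hq1)) ?_
      rw [tsum_geometric_of_lt_one hr0 hq1]
    calc r^(M+1) * ∑ i ∈ Finset.range (m-M), r^i ≤ r^(M+1) * (1-r)⁻¹ :=
          mul_le_mul_of_nonneg_left h3 (pow_nonneg hr0 _)
      _ ≤ 1/2 := hM
  set P : ℝ := ∏ i ∈ Finset.range M, (1 - r^(i+1)) with hP
  have hPpos : 0 < P := Finset.prod_pos fun i _ => by
    have : r^(i+1) < 1 := pow_lt_one₀ hr0 hq1 (Nat.succ_ne_zero i)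
    linarith
  refine ⟨P * (1/2), by positivity, fun m => ?_⟩
  have hlow : ∏ i ∈ Finset.range m, (1 - r^(i+1)) ≤ ‖fac q m‖ := by
    rw [fac, norm_prod]
    refine Finset.prod_le_prod (fun i _ => hfl i) (fun i _ => ?_)
    have := norm_sub_norm_le (1:ℂ) (q^(i+1))
    rw [norm_one, norm_pow] at this
    exact this
  refine le_trans ?_ hlow
  rcases le_or_gt m M with hm | hm
  · -- m ≤ M
    have hsplit : P = (∏ i ∈ Finset.range m, (1 - r^(i+1)))
        * ∏ i ∈ Finset.Ico m M, (1 - r^(i+1)) := by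
      rw [hP, ← Finset.prod_range_mul_prod_Ico _ hm]
    have hIco : ∏ i ∈ Finset.Ico m M, (1 - r^(i+1)) ≤ 1 :=
      Finset.prod_le_one (fun i _ => hfl i) (fun i _ => by
        have : (0:ℝ) ≤ r^(i+1) := pow_nonneg hr0 _
        linarith)
    have h4 : P ≤ ∏ i ∈ Finset.range m, (1 - r^(i+1)) := by
      rw [hsplit]
      have hnn : 0 ≤ ∏ i ∈ Finset.range m, (1 - r^(i+1)) :=
        Finset.prod_nonneg fun i _ => hfl i
      nlinarith
    nlinarith
  · -- M < m
    have hsplit : ∏ i ∈ Finset.range m, (1 - r^(i+1))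
        = P * ∏ i ∈ Finset.Ico M m, (1 - r^(i+1)) := by
      rw [hP, ← Finset.prod_range_mul_prod_Ico _ hm.le]
    rw [hsplit]
    have hw := weierstrass_prod (Finset.Ico M m) (fun i => r^(i+1))
      (fun i _ => pow_nonneg hr0 _)
      (fun i _ => pow_le_one₀ hr0 hq1.le)
    have ht := htail m hm.le
    have : (1/2 : ℝ) ≤ ∏ i ∈ Finset.Ico M m, (1 - r^(i+1)) := by linarith
    nlinarith

theorem gb_norm_bound (hq1 : ‖q‖ < 1) :
    ∃ B > 0, ∀ m k, ‖gb q m k‖ ≤ B := by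
  obtain ⟨L, hL, hlow⟩ := fac_norm_lower hq1
  set U := Real.exp (‖q‖ / (1 - ‖q‖)) with hU
  have hU0 : 0 < U := Real.exp_pos _
  refine ⟨U / (L * L), by positivity, fun m k => ?_⟩
  rw [gb]
  split_ifs with h
  · rw [norm_div, norm_mul]
    apply div_le_div₀ (by positivity) (fac_norm_upper hq1 m) (by positivity)
    exact mul_le_mul (hlow k) (hlow (m-k)) hL.le (norm_nonneg _)
  · simp only [norm_zero]
    positivity

theorem halfdiv {a b : ℤ} (h : a = 2*b) : a/2 = b := by omega

theorem E_succ (n : ℤ) : (n+1)*((n+1)-1)/2 = n*(n-1)/2 + n := by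
  have h := two_halfint n
  have hr : (n+1)*((n+1)-1) = n*(n-1) + 2*n := by ring
  omega

theorem E_negsucc (m : ℤ) : (-(m+1))*((-(m+1))-1)/2 = (-m)*((-m)-1)/2 + (m+1) := by
  have h := two_halfint (-m)
  have hr : (-(m+1))*((-(m+1))-1) = (-m)*((-m)-1) + 2*(m+1) := by ring
  omega

theorem summable_ratio_aux {f c : ℕ → ℝ} (hf : ∀ m, 0 ≤ f m) (hc0 : ∀ m, 0 ≤ c m)
    (hrec : ∀ m, f (m+1) = f m * c m) (hc : Tendsto c atTop (𝓝 0)) : Summable f := by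
  apply summable_of_ratio_norm_eventually_le (r := 1/2) (by norm_num : (1:ℝ)/2 < 1)
  filter_upwards [hc.eventually_le_const (by norm_num : (0:ℝ) < 1/2)] with m hm
  rw [Real.norm_eq_abs, Real.norm_eq_abs, abs_of_nonneg (hf _), abs_of_nonneg (hf _), hrec]
  calc f m * c m ≤ f m * (1/2) := mul_le_mul_of_nonneg_left hm (hf m)
    _ = 1/2 * f m := by ring

theorem summable_bound (hq1 : ‖q‖ < 1) (hq0 : q ≠ 0) {x : ℂ} (hx : x ≠ 0)
    (B : ℝ) (hB : 0 ≤ B) :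
    Summable (fun n : ℤ => B * ‖q‖ ^ (n*(n-1)/2) * ‖x‖ ^ n) := by
  set r := ‖q‖ with hrdef
  set s := ‖x‖ with hsdef
  have hr0 : 0 < r := (norm_pos_iff.mpr hq0)
  have hs0 : 0 < s := (norm_pos_iff.mpr hx)
  apply Summable.of_nat_of_neg
  · apply summable_ratio_aux (c := fun m : ℕ => r^m * s)
    · intro m; positivity
    · intro m; positivity
    · intro m
      push_cast
      rw [E_succ, zpow_add₀ (ne_of_gt hr0), zpow_add₀ (ne_of_gt hs0)]
      rw [zpow_natCast, zpow_one]
      ring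
    · have := (tendsto_pow_atTop_nhds_zero_of_lt_one hr0.le hq1).mul_const s
      rwa [zero_mul] at this
  · apply summable_ratio_aux (c := fun m : ℕ => r^(m+1) * s⁻¹)
    · intro m; positivity
    · intro m; positivity
    · intro m
      push_cast
      rw [E_negsucc m, zpow_add₀ (ne_of_gt hr0),
        show ((m:ℤ)+1) = (((m+1 : ℕ)):ℤ) from by push_cast; ring, zpow_natCast,
        show -(((m+1:ℕ):ℕ):ℤ) = (-(m:ℤ)) + (-1:ℤ) from by push_cast; ring,
        zpow_add₀ (ne_of_gt hs0), zpow_neg_one]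
      ring
    · have := (tendsto_pow_atTop_nhds_zero_of_lt_one hr0.le hq1).mul_const s⁻¹
      rw [zero_mul] at this
      exact this.comp (tendsto_add_atTop_nat 1)

theorem tendsto_gb (hq1 : ‖q‖ < 1) (n : ℤ) :
    Tendsto (fun N : ℕ => gb q (2*N) (((N:ℤ)+n).toNat)) atTop
      (𝓝 (pochInf q q / (pochInf q q * pochInf q q))) := by
  have hfac := tendsto_fac hq1
  have h1 : Tendsto (fun N : ℕ => fac q (2*N)) atTop (𝓝 (pochInf q q)) :=
    hfac.comp (tendsto_atTop_atTop.mpr fun b => ⟨b, fun a ha => by omega⟩)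
  have h2 : Tendsto (fun N : ℕ => fac q (((N:ℤ)+n).toNat)) atTop (𝓝 (pochInf q q)) :=
    hfac.comp (tendsto_atTop_atTop.mpr fun b => ⟨b + n.natAbs, fun a ha => by omega⟩)
  have h3 : Tendsto (fun N : ℕ => fac q (2*N - ((N:ℤ)+n).toNat)) atTop (𝓝 (pochInf q q)) :=
    hfac.comp (tendsto_atTop_atTop.mpr fun b => ⟨b + n.natAbs, fun a ha => by omega⟩)
  have hne : pochInf q q * pochInf q q ≠ 0 :=
    mul_ne_zero (Fq_ne_zero hq1) (Fq_ne_zero hq1)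
  have hdiv := h1.div (h2.mul h3) hne
  apply hdiv.congr'
  filter_upwards [eventually_ge_atTop n.natAbs] with N hN
  simp only [Pi.div_apply]
  rw [gb, if_pos (by omega)]

end JTP
open JTP Filter Topology Finset

theorem stmt9 (q x : ℂ) (hq0 : 0 < ‖q‖) (hq1 : ‖q‖ < 1)
    (hx : x ≠ 0) :
    pochInf x q * pochInf (q / x) q * pochInf q q
      = ∑' n : ℤ, (-1 : ℂ) ^ n * q ^ (n * (n - 1) / 2) * x ^ n := by
  have hq0' : q ≠ 0 := by
    intro h; rw [h] at hq0; simp at hq0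
  have hFqne : pochInf q q ≠ 0 := Fq_ne_zero hq1
  obtain ⟨B, hB, hgb⟩ := gb_norm_bound hq1
  set t : ℤ → ℂ := fun n => (-1:ℂ)^n * q^(n*(n-1)/2) * x^n with ht
  set F : ℕ → ℤ → ℂ := fun N n =>
    if n ∈ Finset.Icc (-(N:ℤ)) (N:ℤ) then gb q (2*N) (((N:ℤ)+n).toNat) * t n else 0 with hF
  have habs_t : ∀ n : ℤ, ‖t n‖
      = ‖q‖ ^ (n*(n-1)/2) * ‖x‖ ^ n := by
    intro n
    rw [ht]
    simp only [norm_mul, norm_zpow]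
    rw [show ‖(-1:ℂ)‖ = 1 by simp, one_zpow, one_mul]
  have h_bound : ∀ N (n : ℤ),
      ‖F N n‖ ≤ B * ‖q‖ ^ (n*(n-1)/2) * ‖x‖ ^ n := by
    intro N n
    rw [hF]
    dsimp only
    split_ifs with h
    · rw [norm_mul, habs_t, mul_assoc]
      apply mul_le_mul_of_nonneg_right (hgb _ _)
      positivity
    · rw [norm_zero]
      have h1 : (0:ℝ) < ‖q‖ ^ (n*(n-1)/2) := zpow_pos ((norm_pos_iff.mpr hq0')) _
      have h2 : (0:ℝ) < ‖x‖ ^ n := zpow_pos ((norm_pos_iff.mpr hx)) _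
      positivity
  have hsummable := summable_bound hq1 hq0' hx B hB.le
  have h_pt : ∀ n : ℤ, Tendsto (fun N => F N n) atTop
      (𝓝 ((pochInf q q / (pochInf q q * pochInf q q)) * t n)) := by
    intro n
    apply ((tendsto_gb hq1 n).mul_const (t n)).congr'
    filter_upwards [eventually_ge_atTop n.natAbs] with N hN
    rw [hF]
    dsimp only
    rw [if_pos (by rw [Finset.mem_Icc]; omega)]
  have hDC := tendsto_tsum_of_dominated_convergence hsummable h_pt
    (Eventually.of_forall h_bound)
  have hsum_eq : ∀ N : ℕ, ∑' n : ℤ, F N n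
      = (∏ j ∈ range N, (1 - q^j * x)) * (∏ j ∈ range N, (1 - q^j * (q/x))) := by
    intro N
    rw [tsum_eq_sum (s := Finset.Icc (-(N:ℤ)) (N:ℤ))
      (fun n hn => by rw [hF]; exact if_neg hn)]
    rw [finite_jtp hq1 hq0' hx N]
    exact Finset.sum_congr rfl fun n hn => by rw [hF]; exact if_pos hn
  have hP : Tendsto
      (fun N => (∏ j ∈ range N, (1 - q^j*x)) * (∏ j ∈ range N, (1 - q^j*(q/x))))
      atTop (𝓝 (pochInf x q * pochInf (q/x) q)) :=
    (tendsto_partial_prod hq1 x).mul (tendsto_partial_prod hq1 (q/x))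
  have hP2 : Tendsto
      (fun N => (∏ j ∈ range N, (1 - q^j*x)) * (∏ j ∈ range N, (1 - q^j*(q/x))))
      atTop (𝓝 (∑' n : ℤ, (pochInf q q / (pochInf q q * pochInf q q)) * t n)) :=
    hDC.congr hsum_eq
  have heq := tendsto_nhds_unique hP2 hP
  rw [tsum_mul_left] at heq
  rw [show (∑' n : ℤ, (-1 : ℂ) ^ n * q ^ (n * (n - 1) / 2) * x ^ n) = ∑' n : ℤ, t n from rfl]
  rw [← heq]
  field_simp
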